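/- Let n ∈ ℕ and (2/3)·n ≤ k ≤ n. Then there exists a subset S ⊆ [1,n]×[1,n] of size k·n such that every line in the plane contains at most k points of S; consequently f_k(n) = kn. -/

import Mathlib

open scoped Classical

/-- The integer grid `[1,n] × [1,n]`. -/
noncomputable def gridZ (n : ℕ) : Finset (ℤ × ℤ) := Finset.Icc (1, 1) ((n : ℤ), (n : ℤ))

lemma modKey (t : ℕ) (x : ℕ) (hx : x < 2*t) : x % t = if x < t then x else x - t := by
  rcases lt_or_ge x t with h|h
  · simp [Nat.mod_eq_of_lt h, h]
  · rw [Nat.mod_eq_sub_mod h, Nat.mod_eq_of_lt (by omega)]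
    simp [show ¬ x < t by omega]

lemma ML (t m i : ℕ) (hm : m ≤ t) (hi : i < t) :
    ((Finset.range t).filter (fun j => (j + i) % t < m)).card = m := by
  conv_rhs => rw [← Finset.card_range m]
  apply Finset.card_bij' (fun j _ => (j + i) % t) (fun c _ => if i ≤ c then c - i else c + t - i)
  · intro j hj
    simp only [Finset.mem_filter, Finset.mem_range] at hj ⊢
    exact hj.2
  · intro c hc
    simp only [Finset.mem_range] at hc
    simp only [Finset.mem_filter, Finset.mem_range]
    rcases le_or_gt i c with h|h
    · rw [if_pos h, modKey t _ (by omega)]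
      split_ifs <;> omega
    · rw [if_neg (by omega), modKey t _ (by omega)]
      split_ifs <;> omega
  · intro j hj
    simp only [Finset.mem_filter, Finset.mem_range] at hj
    rw [modKey t _ (by omega)]
    split_ifs <;> omega
  · intro c hc
    simp only [Finset.mem_range] at hc
    rcases le_or_gt i c with h|h
    · rw [if_pos h, modKey t _ (by omega)]
      split_ifs <;> omega
    · rw [if_neg (by omega), modKey t _ (by omega)]
      split_ifs <;> omega
open scoped Classical

def sig (n m : ℕ) (j : ℕ) : ℤ :=
  if j < n - 3*m then (m:ℤ) + 1 + j else (n:ℤ) - m + 1 + ((j - (n - 3*m) : ℕ) : ℤ)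

noncomputable def rowR (n m : ℕ) (y : ℤ) : Finset ℤ :=
  if y ≤ (m:ℤ) then Finset.Icc 1 (m:ℤ)
  else if y ≤ 2*(m:ℤ) then Finset.Icc ((n:ℤ)+1-2*m) ((n:ℤ)-m)
  else ((Finset.range (n-2*m)).filter
      (fun j => (j + (y - (2*(m:ℤ)+1)).toNat) % (n-2*m) < m)).image (sig n m)

lemma sig_inj (n m : ℕ) (hmn : 3*m ≤ n) : ∀ j1 < n-2*m, ∀ j2 < n-2*m,
    sig n m j1 = sig n m j2 → j1 = j2 := by
  intro j1 h1 j2 h2 h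
  unfold sig at h
  split_ifs at h <;> omega

lemma sig_range (n m : ℕ) (hmn : 3*m ≤ n) : ∀ j < n-2*m,
    1 ≤ sig n m j ∧ sig n m j ≤ (n:ℤ) := by
  intro j hj
  unfold sig
  split_ifs <;> constructor <;> push_cast <;> omega

lemma sig_avoid (n m : ℕ) (hmn : 3*m ≤ n) : ∀ j < n-2*m,
    ¬ (sig n m j ≤ (m:ℤ)) ∧ ¬ ((n:ℤ)+1-2*m ≤ sig n m j ∧ sig n m j ≤ (n:ℤ)-m) := by
  intro j hj
  unfold sig
  split_ifs <;> constructor <;> push_cast <;> omega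

lemma rowR_card (n m : ℕ) (hmn : 3*m ≤ n) (y : ℤ) (hy1 : 1 ≤ y) (hy2 : y ≤ (n:ℤ)) :
    (rowR n m y).card = m := by
  unfold rowR
  split_ifs with h1 h2
  · rw [Int.card_Icc]; omega
  · rw [Int.card_Icc]; push_cast; omega
  · rw [Finset.card_image_of_injOn, ML (n-2*m) m _ (by omega) (by omega)]
    intro a ha b hb hab
    simp only [Finset.coe_filter, Set.mem_setOf_eq, Finset.mem_range] at ha hb
    exact sig_inj n m hmn a ha.1 b hb.1 hab

lemma rowR_subset (n m : ℕ) (hmn : 3*m ≤ n) (y : ℤ) :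
    rowR n m y ⊆ Finset.Icc 1 (n:ℤ) := by
  unfold rowR
  split_ifs with h1 h2
  · exact Finset.Icc_subset_Icc_right (by omega)
  · exact Finset.Icc_subset_Icc (by push_cast; omega) (by push_cast; omega)
  · intro x hx
    simp only [Finset.mem_image, Finset.mem_filter, Finset.mem_range] at hx
    obtain ⟨j, ⟨hj, _⟩, rfl⟩ := hx
    have := sig_range n m hmn j hj
    simp only [Finset.mem_Icc]
    exact this

lemma colCount (n m : ℕ) (hmn : 3*m ≤ n) (x₀ : ℤ) (hx1 : 1 ≤ x₀) (hx2 : x₀ ≤ (n:ℤ)) :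
    m ≤ ((Finset.Icc (1:ℤ) (n:ℤ)).filter (fun y => x₀ ∈ rowR n m y)).card := by
  rcases Nat.eq_zero_or_pos m with rfl|hm
  · exact Nat.zero_le _
  rcases le_or_gt x₀ (m:ℤ) with hA|hA
  · -- y ∈ [1,m]
    calc m = (Finset.Icc (1:ℤ) (m:ℤ)).card := by rw [Int.card_Icc]; omega
    _ ≤ _ := by
      apply Finset.card_le_card
      intro y hy
      simp only [Finset.mem_Icc] at hy
      simp only [Finset.mem_filter, Finset.mem_Icc]
      refine ⟨⟨hy.1, by omega⟩, ?_⟩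
      rw [rowR, if_pos hy.2]
      simp only [Finset.mem_Icc]
      exact ⟨hx1, hA⟩
  rcases (em ((n:ℤ)+1-2*m ≤ x₀ ∧ x₀ ≤ (n:ℤ)-m)) with hB|hB
  · -- y ∈ [m+1, 2m]
    calc m = (Finset.Icc ((m:ℤ)+1) (2*(m:ℤ))).card := by rw [Int.card_Icc]; omega
    _ ≤ _ := by
      apply Finset.card_le_card
      intro y hy
      simp only [Finset.mem_Icc] at hy
      simp only [Finset.mem_filter, Finset.mem_Icc]
      refine ⟨⟨by omega, by omega⟩, ?_⟩
      rw [rowR, if_neg (by omega), if_pos (by omega)]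
      simp only [Finset.mem_Icc]
      exact hB
  · -- third case
    set t := n - 2*m with ht
    have htpos : 1 ≤ t := by omega
    set j₀ : ℕ := if x₀ ≤ (n:ℤ)-2*m then (x₀ - (m:ℤ) - 1).toNat
        else (x₀ - ((n:ℤ)-m+1)).toNat + (n - 3*m) with hj₀
    have hj₀t : j₀ < t := by rw [hj₀]; split_ifs <;> push_cast <;> omega
    have hsig : sig n m j₀ = x₀ := by
      rw [hj₀, sig]
      split_ifs with h1 h2 h3 <;> push_cast <;> omega
    calc m = ((Finset.range t).filter (fun i => (i + j₀) % t < m)).card :=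
          (ML t m j₀ (by omega) hj₀t).symm
    _ = (((Finset.range t).filter (fun i => (i + j₀) % t < m)).image
          (fun i : ℕ => (2*(m:ℤ)+1+i))).card := by
        rw [Finset.card_image_of_injOn]
        intro a _ b _ hab
        simpa using hab
    _ ≤ _ := by
      apply Finset.card_le_card
      intro y hy
      simp only [Finset.mem_image, Finset.mem_filter, Finset.mem_range] at hy
      obtain ⟨i, ⟨hi, hcond⟩, rfl⟩ := hy
      simp only [Finset.mem_filter, Finset.mem_Icc]
      refine ⟨⟨by push_cast; omega, by push_cast; omega⟩, ?_⟩
      rw [rowR, if_neg (by push_cast; omega), if_neg (by push_cast; omega)]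
      simp only [Finset.mem_image, Finset.mem_filter, Finset.mem_range]
      refine ⟨j₀, ⟨hj₀t, ?_⟩, hsig⟩
      have : (2*(m:ℤ)+1+i - (2*(m:ℤ)+1)).toNat = i := by omega
      rw [this, Nat.add_comm]
      exact hcond

lemma auxMod (T : Finset (ℤ×ℤ)) (n k M : ℕ) (x₀ : ℤ) (hM : 2 ≤ M)
    (hrange : ∀ r ∈ T, 1 ≤ r.1 ∧ r.1 ≤ (n:ℤ))
    (hinj : ∀ r ∈ T, ∀ r' ∈ T, r.1 = r'.1 → r = r')
    (hmod : ∀ r ∈ T, (M:ℤ) ∣ r.1 - x₀)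
    (hk : n + 1 ≤ 2*k) : T.card ≤ k := by
  calc T.card ≤ (Finset.range ((n-1)/M + 1)).card := by
        apply Finset.card_le_card_of_injOn (fun r => (r.1 - 1).toNat / M)
        · intro r hr
          simp only [Finset.mem_coe, Finset.mem_range]
          have h1 := hrange r hr
          have : (r.1 - 1).toNat ≤ n - 1 := by omega
          exact Nat.lt_succ_of_le (Nat.div_le_div_right this)
        · intro r hr r' hr' h
          simp only at h
          apply hinj r hr r' hr'
          have h1 := hrange r hr
          have h2 := hrange r' hr'
          have hd : (M:ℤ) ∣ r.1 - r'.1 := by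
            have := dvd_sub (hmod r hr) (hmod r' hr')
            simpa using this
          have e1 := Nat.div_add_mod (r.1 - 1).toNat M
          have e2 := Nat.div_add_mod (r'.1 - 1).toNat M
          set q1 := (r.1 - 1).toNat / M with hq1
          set q2 := (r'.1 - 1).toNat / M with hq2
          set s1 := (r.1 - 1).toNat % M with hs1
          set s2 := (r'.1 - 1).toNat % M with hs2
          have m1 : s1 < M := Nat.mod_lt _ (by omega)
          have m2 : s2 < M := Nat.mod_lt _ (by omega)
          have c1 : r.1 - 1 = (M:ℤ)*q1 + s1 := by
            have : ((M * q1 + s1 : ℕ) : ℤ) = ((r.1 - 1).toNat : ℤ) := by exact_mod_cast e1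
            push_cast at this
            omega
          have c2 : r'.1 - 1 = (M:ℤ)*q2 + s2 := by
            have : ((M * q2 + s2 : ℕ) : ℤ) = ((r'.1 - 1).toNat : ℤ) := by exact_mod_cast e2
            push_cast at this
            omega
          have hdiff : r.1 - r'.1 = (s1:ℤ) - s2 := by rw [h] at c1; linarith
          have : r.1 - r'.1 = 0 := by
            apply Int.eq_zero_of_abs_lt_dvd hd
            rw [hdiff, abs_lt]
            constructor <;> push_cast <;> omega
          omega
  _ = (n-1)/M + 1 := Finset.card_range _
  _ ≤ (n-1)/2 + 1 := by
        have := Nat.div_le_div_left (a := n-1) hM (by omega)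
        omega
  _ ≤ k := by
        have h2 : 2*((n-1)/2) ≤ n - 1 := by omega
        omega

lemma grid_mem (n : ℕ) (p : ℤ×ℤ) : p ∈ gridZ n ↔ 1 ≤ p.1 ∧ p.1 ≤ (n:ℤ) ∧ 1 ≤ p.2 ∧ p.2 ≤ (n:ℤ) := by
  cases p with
  | mk x y => simp [gridZ, Finset.mem_Icc, Prod.le_def]; tauto

lemma diagCase (n m : ℕ) (hmn : 3*m ≤ n) (T : Finset (ℤ×ℤ)) (d : ℤ)
    (hT : ∀ r ∈ T, (r ∈ gridZ n ∧ r.1 ∉ rowR n m r.2) ∧ r.1 - r.2 = d) :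
    T.card ≤ n - m := by
  calc T.card ≤ (Finset.Icc (min (m:ℤ) ((m:ℤ)-d) + 1) (min (n:ℤ) ((n:ℤ)-d))).card := by
        apply Finset.card_le_card_of_injOn (fun r => r.2)
        · intro r hr
          obtain ⟨⟨hg, hrow⟩, hd⟩ := hT r hr
          rw [grid_mem] at hg
          simp only [Finset.mem_coe, Finset.mem_Icc]
          constructor
          · by_contra hcon
            push_neg at hcon
            have h2m : r.2 ≤ (m:ℤ) := by omega
            apply hrow
            rw [rowR, if_pos h2m]
            simp only [Finset.mem_Icc]
            omega
          · omega
        · intro r hr r' hr' h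
          simp only at h
          have h1 := (hT r hr).2
          have h2 := (hT r' hr').2
          have : r.1 = r'.1 := by omega
          exact Prod.ext this h
  _ ≤ n - m := by
        rw [Int.card_Icc]
        rcases le_total d 0 with h'|h' <;> simp [min_def] <;> split_ifs <;> omega

lemma antidiagCase (n m : ℕ) (hmn : 3*m ≤ n) (T : Finset (ℤ×ℤ)) (e : ℤ)
    (hT : ∀ r ∈ T, (r ∈ gridZ n ∧ r.1 ∉ rowR n m r.2) ∧ r.1 + r.2 = e) :
    T.card ≤ n - m := by
  set L := Finset.Icc (max 1 (e-(n:ℤ))) (min (n:ℤ) (e-1)) with hL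
  set J := Finset.Icc (max ((m:ℤ)+1) (e-(n:ℤ)+m)) (min (2*(m:ℤ)) (e-(n:ℤ)-1+2*m)) with hJ
  have hJL : J ⊆ L := Finset.Icc_subset_Icc
    (max_le_max (by omega) (by omega)) (min_le_min (by omega) (by omega))
  calc T.card ≤ (L \ J).card := by
        apply Finset.card_le_card_of_injOn (fun r => r.2)
        · intro r hr
          obtain ⟨⟨hg, hrow⟩, he⟩ := hT r hr
          rw [grid_mem] at hg
          simp only [Finset.mem_coe, Finset.mem_sdiff, hL, hJ, Finset.mem_Icc, le_min_iff, max_le_iff,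
            min_le_iff, le_max_iff]
          constructor
          · omega
          · intro hcon
            obtain ⟨⟨ha, hb⟩, hc, hd⟩ := hcon
            apply hrow
            rw [rowR, if_neg (by omega), if_pos (by omega)]
            simp only [Finset.mem_Icc]
            omega
        · intro r hr r' hr' h
          simp only at h
          have h1 := (hT r hr).2
          have h2 := (hT r' hr').2
          have : r.1 = r'.1 := by omega
          exact Prod.ext this h
  _ = L.card - J.card := Finset.card_sdiff_of_subset hJL
  _ ≤ n - m := by
        rw [hL, hJ, Int.card_Icc, Int.card_Icc]
        simp only [min_def, max_def]
        split_ifs <;> omega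

lemma vertCase (n m : ℕ) (hmn : 3*m ≤ n) (T : Finset (ℤ×ℤ)) (x₀ : ℤ)
    (hx1 : 1 ≤ x₀) (hx2 : x₀ ≤ (n:ℤ))
    (hT : ∀ r ∈ T, (r ∈ gridZ n ∧ r.1 ∉ rowR n m r.2) ∧ r.1 = x₀) :
    T.card ≤ n - m := by
  calc T.card ≤ ((Finset.Icc (1:ℤ) (n:ℤ)).filter (fun y => x₀ ∉ rowR n m y)).card := by
        apply Finset.card_le_card_of_injOn (fun r => r.2)
        · intro r hr
          obtain ⟨⟨hg, hrow⟩, hx⟩ := hT r hr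
          rw [grid_mem] at hg
          simp only [Finset.mem_coe, Finset.mem_filter, Finset.mem_Icc]
          refine ⟨⟨hg.2.2.1, hg.2.2.2⟩, ?_⟩
          rw [← hx]; exact hrow
        · intro r hr r' hr' h
          simp only at h
          have h1 := (hT r hr).2
          have h2 := (hT r' hr').2
          exact Prod.ext (h1.trans h2.symm) h
  _ ≤ n - m := by
        have hsplit := Finset.card_filter_add_card_filter_not
          (s := Finset.Icc (1:ℤ) (n:ℤ)) (p := fun y => x₀ ∈ rowR n m y)
        have hcol := colCount n m hmn x₀ hx1 hx2
        have hIcc : (Finset.Icc (1:ℤ) (n:ℤ)).card = n := by rw [Int.card_Icc]; omega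
        have : ((Finset.Icc (1:ℤ) (n:ℤ)).filter (fun y => ¬ x₀ ∈ rowR n m y)).card
            = n - ((Finset.Icc (1:ℤ) (n:ℤ)).filter (fun y => x₀ ∈ rowR n m y)).card := by
          omega
        omega

lemma horizCase (n m : ℕ) (hmn : 3*m ≤ n) (T : Finset (ℤ×ℤ)) (y₀ : ℤ)
    (hy1 : 1 ≤ y₀) (hy2 : y₀ ≤ (n:ℤ))
    (hT : ∀ r ∈ T, (r ∈ gridZ n ∧ r.1 ∉ rowR n m r.2) ∧ r.2 = y₀) :
    T.card ≤ n - m := by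
  calc T.card ≤ (Finset.Icc (1:ℤ) (n:ℤ) \ rowR n m y₀).card := by
        apply Finset.card_le_card_of_injOn (fun r => r.1)
        · intro r hr
          obtain ⟨⟨hg, hrow⟩, hy⟩ := hT r hr
          rw [grid_mem] at hg
          simp only [Finset.mem_coe, Finset.mem_sdiff, Finset.mem_Icc]
          refine ⟨⟨hg.1, hg.2.1⟩, ?_⟩
          rw [← hy]; exact hrow
        · intro r hr r' hr' h
          simp only at h
          have h1 := (hT r hr).2
          have h2 := (hT r' hr').2
          exact Prod.ext h (h1.trans h2.symm)
  _ ≤ n - m := by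
        rw [Finset.card_sdiff_of_subset (rowR_subset n m hmn y₀), rowR_card n m hmn y₀ hy1 hy2]
        have : (Finset.Icc (1:ℤ) (n:ℤ)).card = n := by rw [Int.card_Icc]; omega
        omega

/-- For `(2/3)n ≤ k ≤ n` there is a no-(k+1)-in-line set of size `k·n` in `[1,n]²`;
together with the pigeonhole upper bound, `f_k(n) = k·n`. -/
theorem stmt15 (n k : ℕ) (h1 : 2 * n ≤ 3 * k) (h2 : k ≤ n) :
    (∃ S : Finset (ℤ × ℤ), S ⊆ gridZ n ∧ S.card = k * n ∧
      ∀ a b c : ℝ, (a, b) ≠ (0, 0) →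
        (S.filter (fun p => a * (p.1 : ℝ) + b * (p.2 : ℝ) = c)).card ≤ k) ∧
    (∀ S : Finset (ℤ × ℤ), S ⊆ gridZ n →
      (∀ a b c : ℝ, (a, b) ≠ (0, 0) →
        (S.filter (fun p => a * (p.1 : ℝ) + b * (p.2 : ℝ) = c)).card ≤ k) →
      S.card ≤ k * n) := by
  set m := n - k with hm
  have hmn : 3*m ≤ n := by omega
  have hkm : n - m = k := by omega
  constructor
  · -- construction
    set R : Finset (ℤ×ℤ) := (Finset.Icc (1:ℤ) (n:ℤ)).biUnion
      (fun y => (rowR n m y).image (fun x => ((x, y) : ℤ×ℤ))) with hR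
    set S : Finset (ℤ×ℤ) := gridZ n \ R with hS
    have hSsub : S ⊆ gridZ n := Finset.sdiff_subset
    have hRsub : R ⊆ gridZ n := by
      intro r hr
      simp only [hR, Finset.mem_biUnion, Finset.mem_image, Finset.mem_Icc] at hr
      obtain ⟨y, hy, x, hx, rfl⟩ := hr
      have := rowR_subset n m hmn y hx
      simp only [Finset.mem_Icc] at this
      rw [grid_mem]
      exact ⟨this.1, this.2, hy.1, hy.2⟩
    have hRcard : R.card = n * m := by
      have hdisj : ∀ y1 ∈ Finset.Icc (1:ℤ) (n:ℤ), ∀ y2 ∈ Finset.Icc (1:ℤ) (n:ℤ), y1 ≠ y2 →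
          Disjoint ((rowR n m y1).image (fun x => ((x, y1) : ℤ×ℤ)))
            ((rowR n m y2).image (fun x => ((x, y2) : ℤ×ℤ))) := by
        intro y1 _ y2 _ hne
        simp only [Finset.disjoint_left, Finset.mem_image]
        rintro r ⟨x1, _, rfl⟩ ⟨x2, _, h⟩
        have h2 := congrArg Prod.snd h
        simp only at h2
        exact hne h2.symm
      have hcards : ∀ y ∈ Finset.Icc (1:ℤ) (n:ℤ),
          ((rowR n m y).image (fun x => ((x, y) : ℤ×ℤ))).card = m := by
        intro y hy
        simp only [Finset.mem_Icc] at hy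
        rw [Finset.card_image_of_injective _ (fun x1 x2 h => by simpa using h),
          rowR_card n m hmn y hy.1 hy.2]
      rw [hR, Finset.card_biUnion hdisj, Finset.sum_congr rfl hcards, Finset.sum_const,
        smul_eq_mul, Int.card_Icc]
      have : ((n:ℤ)+1-1).toNat = n := by omega
      rw [this]
    have hgridcard : (gridZ n).card = n * n := by
      rw [gridZ, Finset.Icc_prod_def, Finset.card_product]
      simp [Int.card_Icc]
    have hScard : S.card = k * n := by
      rw [hS, Finset.card_sdiff_of_subset hRsub, hgridcard, hRcard]
      rw [← Nat.mul_sub, hkm, Nat.mul_comm]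
    have hSmem : ∀ r ∈ S, r ∈ gridZ n ∧ r.1 ∉ rowR n m r.2 := by
      intro r hr
      rw [hS, Finset.mem_sdiff] at hr
      refine ⟨hr.1, fun hrow => hr.2 ?_⟩
      have hg := (grid_mem n r).mp hr.1
      simp only [hR, Finset.mem_biUnion, Finset.mem_image, Finset.mem_Icc]
      exact ⟨r.2, ⟨hg.2.2.1, hg.2.2.2⟩, r.1, hrow, rfl⟩
    refine ⟨S, hSsub, hScard, ?_⟩
    intro a b c hab
    by_contra hcon
    push_neg at hcon
    set T := S.filter (fun p => a * (p.1 : ℝ) + b * (p.2 : ℝ) = c) with hT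
    have hTS : ∀ r ∈ T, r ∈ gridZ n ∧ r.1 ∉ rowR n m r.2 :=
      fun r hr => hSmem r (Finset.mem_filter.mp hr).1
    have hline : ∀ r ∈ T, a * (r.1:ℝ) + b * (r.2:ℝ) = c :=
      fun r hr => (Finset.mem_filter.mp hr).2
    have hn1 : 1 ≤ n := by
      obtain ⟨r, hr⟩ := Finset.card_pos.mp (show 0 < T.card by omega)
      have := (grid_mem n r).mp (hTS r hr).1
      omega
    have hk1 : 1 ≤ k := by omega
    have hn2k : n + 1 ≤ 2*k := by omega
    obtain ⟨p, hp, q, hq, hpq⟩ := Finset.one_lt_card.mp (show 1 < T.card by omega)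
    set u := q.1 - p.1 with hu'
    set v := q.2 - p.2 with hv'
    have hab' : a ≠ 0 ∨ b ≠ 0 := by
      by_contra hcc
      push_neg at hcc
      exact hab (by simp [hcc.1, hcc.2])
    have hkey : ∀ r ∈ T, (r.1 - p.1) * v = (r.2 - p.2) * u := by
      intro r hr
      have hlp := hline p hp
      have hlq := hline q hq
      have hlr := hline r hr
      have E : ((r.1:ℝ) - (p.1:ℝ)) * ((q.2:ℝ) - (p.2:ℝ))
          = ((r.2:ℝ) - (p.2:ℝ)) * ((q.1:ℝ) - (p.1:ℝ)) := by
        rcases hab' with ha|hb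
        · apply mul_left_cancel₀ ha
          linear_combination ((q.2:ℝ)-(p.2:ℝ)) * hlr - ((q.2:ℝ)-(p.2:ℝ)) * hlp
            - ((r.2:ℝ)-(p.2:ℝ)) * hlq + ((r.2:ℝ)-(p.2:ℝ)) * hlp
        · apply mul_left_cancel₀ hb
          linear_combination ((r.1:ℝ)-(p.1:ℝ)) * hlq - ((r.1:ℝ)-(p.1:ℝ)) * hlp
            - ((q.1:ℝ)-(p.1:ℝ)) * hlr + ((q.1:ℝ)-(p.1:ℝ)) * hlp
      rw [hu', hv']
      exact_mod_cast E
    have hinj1 : ∀ r ∈ T, ∀ r' ∈ T, r.1 = r'.1 → u ≠ 0 → r = r' := by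
      intro r hr r' hr' h hu0
      have k1 := hkey r hr
      have k2 := hkey r' hr'
      rw [h] at k1
      have : (r.2 - p.2) * u = (r'.2 - p.2) * u := by omega
      have := mul_right_cancel₀ hu0 this
      exact Prod.ext h (by omega)
    by_cases hu : u = 0
    · -- vertical
      have hv : v ≠ 0 := by
        intro hv0
        apply hpq
        have e1 : p.1 = q.1 := by omega
        have e2 : p.2 = q.2 := by omega
        exact Prod.ext e1 e2
      have hvert : ∀ r ∈ T, (r ∈ gridZ n ∧ r.1 ∉ rowR n m r.2) ∧ r.1 = p.1 := by
        intro r hr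
        have hk0 := hkey r hr
        rw [hu] at hk0
        simp only [mul_zero] at hk0
        refine ⟨hTS r hr, ?_⟩
        rcases mul_eq_zero.mp hk0 with h|h
        · omega
        · exact absurd h hv
      have hpg := (grid_mem n p).mp (hTS p hp).1
      have := vertCase n m hmn T p.1 hpg.1 hpg.2.1 hvert
      omega
    · by_cases hv : v = 0
      · -- horizontal
        have hhor : ∀ r ∈ T, (r ∈ gridZ n ∧ r.1 ∉ rowR n m r.2) ∧ r.2 = p.2 := by
          intro r hr
          have hk := hkey r hr
          rw [hv] at hk
          simp only [mul_zero] at hk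
          refine ⟨hTS r hr, ?_⟩
          rcases mul_eq_zero.mp hk.symm with h|h
          · omega
          · exact absurd h hu
        have hpg := (grid_mem n p).mp (hTS p hp).1
        have := horizCase n m hmn T p.2 hpg.2.2.1 hpg.2.2.2 hhor
        omega
      · by_cases huv : u = v
        · -- diagonal
          have hdiag : ∀ r ∈ T, (r ∈ gridZ n ∧ r.1 ∉ rowR n m r.2) ∧ r.1 - r.2 = p.1 - p.2 := by
            intro r hr
            have hk := hkey r hr
            rw [← huv] at hk
            have h0 : (r.1 - p.1 - (r.2 - p.2)) * u = 0 := by linear_combination hk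
            refine ⟨hTS r hr, ?_⟩
            rcases mul_eq_zero.mp h0 with h|h
            · omega
            · exact absurd h hu
          have := diagCase n m hmn T (p.1 - p.2) hdiag
          omega
        · by_cases huv' : u = -v
          · -- antidiagonal
            have hadiag : ∀ r ∈ T, (r ∈ gridZ n ∧ r.1 ∉ rowR n m r.2) ∧ r.1 + r.2 = p.1 + p.2 := by
              intro r hr
              have hk := hkey r hr
              rw [huv'] at hk
              have h0 : (r.1 - p.1 + (r.2 - p.2)) * v = 0 := by linear_combination hk
              refine ⟨hTS r hr, ?_⟩
              rcases mul_eq_zero.mp h0 with h|h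
              · omega
              · exact absurd h hv
            have := antidiagCase n m hmn T (p.1 + p.2) hadiag
            omega
          · -- general slope
            set g : ℕ := Int.gcd u v with hg'
            have hgpos : 0 < g := Int.gcd_pos_of_ne_zero_left _ hu
            have hgz : (g:ℤ) ≠ 0 := by exact_mod_cast hgpos.ne'
            set u' := u / (g:ℤ) with hu''
            set v' := v / (g:ℤ) with hv''
            have hgu : (g:ℤ) * u' = u := Int.mul_ediv_cancel' (Int.gcd_dvd_left u v)
            have hgv : (g:ℤ) * v' = v := Int.mul_ediv_cancel' (Int.gcd_dvd_right u v)
            have hcop : Int.gcd u' v' = 1 := Int.gcd_div_gcd_div_gcd hgpos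
            have hcop' : IsCoprime u' v' := Int.isCoprime_iff_gcd_eq_one.mpr hcop
            have hu'0 : u' ≠ 0 := by intro h; rw [h, mul_zero] at hgu; exact hu hgu.symm
            have hv'0 : v' ≠ 0 := by intro h; rw [h, mul_zero] at hgv; exact hv hgv.symm
            have hkey' : ∀ r ∈ T, (r.1 - p.1) * v' = (r.2 - p.2) * u' := by
              intro r hr
              have hk := hkey r hr
              apply mul_left_cancel₀ hgz
              rw [← hgu, ← hgv] at hk
              ring_nf at hk ⊢
              omega
            have hdu : ∀ r ∈ T, u' ∣ r.1 - p.1 := by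
              intro r hr
              apply hcop'.dvd_of_dvd_mul_right
              rw [hkey' r hr]
              exact dvd_mul_left _ _
            have hdv : ∀ r ∈ T, v' ∣ r.2 - p.2 := by
              intro r hr
              apply hcop'.symm.dvd_of_dvd_mul_right
              rw [← hkey' r hr]
              exact dvd_mul_left _ _
            have habs : u'.natAbs ≠ v'.natAbs := by
              intro h
              rcases Int.natAbs_eq_natAbs_iff.mp h with h'|h'
              · exact huv (by rw [← hgu, ← hgv, h'])
              · exact huv' (by rw [← hgu, ← hgv, h']; ring)
            have hu'1 : 1 ≤ u'.natAbs := by omega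
            have hv'1 : 1 ≤ v'.natAbs := by omega
            rcases le_or_gt v'.natAbs u'.natAbs with hMle|hMle
            · have hM : 2 ≤ u'.natAbs := by omega
              have := auxMod T n k u'.natAbs p.1 hM
                (fun r hr => by
                  have := (grid_mem n r).mp (hTS r hr).1
                  exact ⟨this.1, this.2.1⟩)
                (fun r hr r' hr' h => hinj1 r hr r' hr' h hu)
                (fun r hr => Int.natAbs_dvd.mpr (hdu r hr))
                hn2k
              omega
            · have hM : 2 ≤ v'.natAbs := by omega
              set T2 := T.image Prod.swap with hT2
              have hT2card : T2.card = T.card :=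
                Finset.card_image_of_injective _ Prod.swap_injective
              have hmem2 : ∀ r ∈ T2, Prod.swap r ∈ T := by
                intro r hr
                simp only [hT2, Finset.mem_image] at hr
                obtain ⟨s, hs, rfl⟩ := hr
                simpa using hs
              have := auxMod T2 n k v'.natAbs p.2 hM
                (fun r hr => by
                  have := (grid_mem n (Prod.swap r)).mp (hTS _ (hmem2 r hr)).1
                  simp only [Prod.fst_swap, Prod.snd_swap] at this
                  exact ⟨this.2.2.1, this.2.2.2⟩)
                (fun r hr r' hr' h => by
                  have h1 := hkey' _ (hmem2 r hr)
                  have h2 := hkey' _ (hmem2 r' hr')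
                  simp only [Prod.fst_swap, Prod.snd_swap] at h1 h2
                  have hyy : r.1 = r'.1 := h
                  rw [hyy] at h1
                  have : (r.2 - p.1) * v' = (r'.2 - p.1) * v' := by omega
                  have := mul_right_cancel₀ hv'0 this
                  exact Prod.ext hyy (by omega))
                (fun r hr => by
                  have := hdv _ (hmem2 r hr)
                  simp only [Prod.snd_swap] at this
                  exact Int.natAbs_dvd.mpr this)
                hn2k
              omega
  · -- upper bound
    intro S hsub hline
    have hfib : ∀ p ∈ S, p.2 ∈ Finset.Icc (1:ℤ) (n:ℤ) := by
      intro p hp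
      have := (grid_mem n p).mp (hsub hp)
      simp only [Finset.mem_Icc]
      exact ⟨this.2.2.1, this.2.2.2⟩
    rw [Finset.card_eq_sum_card_fiberwise hfib]
    calc ∑ y ∈ Finset.Icc (1:ℤ) (n:ℤ), (S.filter (fun p => p.2 = y)).card
        ≤ ∑ y ∈ Finset.Icc (1:ℤ) (n:ℤ), k := by
          apply Finset.sum_le_sum
          intro y _
          have hsubf : S.filter (fun p => p.2 = y)
              ⊆ S.filter (fun p => (0:ℝ) * (p.1:ℝ) + (1:ℝ) * (p.2:ℝ) = (y:ℝ)) := by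
            intro r hr
            simp only [Finset.mem_filter] at hr ⊢
            refine ⟨hr.1, ?_⟩
            rw [hr.2]
            ring
          calc (S.filter (fun p => p.2 = y)).card
              ≤ (S.filter (fun p => (0:ℝ) * (p.1:ℝ) + (1:ℝ) * (p.2:ℝ) = (y:ℝ))).card :=
                Finset.card_le_card hsubf
          _ ≤ k := hline 0 1 y (by simp)
    _ = n * k := by rw [Finset.sum_const, Int.card_Icc, smul_eq_mul]; norm_num
    _ = k * n := Nat.mul_comm n k
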